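/- Let $\mathcal{A} : \mathbb{S}^n \to \mathbb{R}^m$ be a linear map and $b \in \mathbb{R}^m$. Suppose there exists $\widehat{X} \succ 0$ with $\mathcal{A}\widehat{X} = b$, and let $\mathcal{X} = \{X \in \mathbb{S}^n_+ \mid \mathcal{A}X = b\}$. Then for any $X \in \mathbb{S}^n_+$, $\mathrm{dist}(X, \mathcal{X}) \le \sigma_{\min}^{-1}(\mathcal{A})\big(1 + \lambda_{\min}^{-1}(\widehat{X})\|X - \widehat{X}\|\big)\|b - \mathcal{A}X\|$, where $\sigma_{\min}(\mathcal{A})$ is the smallest positive singular value of $\mathcal{A}$ and $\lambda_{\min}(\widehat{X})$ is the smallest eigenvalue of $\widehat{X}$. -/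

import Mathlib

open Matrix

attribute [local instance] Matrix.frobeniusNormedAddCommGroup
attribute [local instance] Matrix.frobeniusNormedSpace

lemma frob_sq {n : ℕ} (S : Matrix (Fin n) (Fin n) ℝ) :
    ‖S‖ ^ 2 = ∑ i, ∑ j, (S i j) ^ 2 := by
  rw [frobenius_norm_def, ← Real.rpow_natCast _ 2,
    ← Real.rpow_mul (by positivity)]
  norm_num

lemma quad_abs_le {n : ℕ} (S : Matrix (Fin n) (Fin n) ℝ) (x : Fin n → ℝ) :
    |x ⬝ᵥ (S *ᵥ x)| ≤ ‖S‖ * (x ⬝ᵥ x) := by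
  have h1 : x ⬝ᵥ (S *ᵥ x) = ∑ p : Fin n × Fin n, S p.1 p.2 * (x p.1 * x p.2) := by
    rw [Fintype.sum_prod_type]
    simp only [dotProduct, mulVec, Finset.mul_sum]
    exact Finset.sum_congr rfl fun i _ => Finset.sum_congr rfl fun j _ => by ring
  have hcs := Finset.sum_mul_sq_le_sq_mul_sq Finset.univ
    (fun p : Fin n × Fin n => S p.1 p.2) (fun p => x p.1 * x p.2)
  have hf : ∑ p : Fin n × Fin n, (S p.1 p.2) ^ 2 = ‖S‖ ^ 2 := by
    rw [frob_sq, Fintype.sum_prod_type]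
  have hg : ∑ p : Fin n × Fin n, (x p.1 * x p.2) ^ 2 = (x ⬝ᵥ x) ^ 2 := by
    rw [Fintype.sum_prod_type]
    simp only [dotProduct, mul_pow, sq]
    rw [Finset.sum_mul_sum]
    exact Finset.sum_congr rfl fun i _ => Finset.sum_congr rfl fun j _ => by ring
  rw [hf, hg, ← mul_pow] at hcs
  have hb : 0 ≤ ‖S‖ * (x ⬝ᵥ x) :=
    mul_nonneg (norm_nonneg _) (Finset.sum_nonneg fun i _ => mul_self_nonneg _)
  rw [h1] at *
  nlinarith [abs_nonneg (∑ p : Fin n × Fin n, S p.1 p.2 * (x p.1 * x p.2)),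
    sq_abs (∑ p : Fin n × Fin n, S p.1 p.2 * (x p.1 * x p.2))]

lemma smul_one_add_psd {n : ℕ} (S : Matrix (Fin n) (Fin n) ℝ) (hS : Sᵀ = S)
    (c : ℝ) (hc : ‖S‖ ≤ c) : (c • (1 : Matrix (Fin n) (Fin n) ℝ) + S).PosSemidef := by
  refine Matrix.PosSemidef.of_dotProduct_mulVec_nonneg ?_ ?_
  · show _ᴴ = _
    rw [conjTranspose_add, conjTranspose_smul, conjTranspose_one]
    simp only [star_trivial]
    rw [show Sᴴ = Sᵀ from rfl, hS]
  · intro x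
    simp only [star_trivial, add_mulVec, dotProduct_add, smul_mulVec, one_mulVec,
      dotProduct_smul, smul_eq_mul]
    have h := quad_abs_le S x
    have hxx : 0 ≤ x ⬝ᵥ x := Finset.sum_nonneg fun i _ => mul_self_nonneg _
    nlinarith [neg_abs_le (x ⬝ᵥ (S *ᵥ x))]

lemma psd_smul {n : ℕ} {M : Matrix (Fin n) (Fin n) ℝ} (hM : M.PosSemidef)
    {c : ℝ} (hc : 0 ≤ c) : (c • M).PosSemidef := by
  refine Matrix.PosSemidef.of_dotProduct_mulVec_nonneg ?_ ?_
  · show _ᴴ = _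
    rw [conjTranspose_smul, star_trivial, hM.1]
  · intro x
    rw [smul_mulVec, dotProduct_smul, smul_eq_mul]
    exact mul_nonneg hc (hM.dotProduct_mulVec_nonneg x)

/-- `σ` acts as (a lower bound by) the smallest positive singular value of the linear map
`A` restricted to symmetric matrices: every vector in the range of `A` (over symmetric
matrices) has a symmetric preimage of norm at most `σ⁻¹` times its norm. -/
def IsMinSingularBound {n m : ℕ} (A : Matrix (Fin n) (Fin n) ℝ →ₗ[ℝ] EuclideanSpace ℝ (Fin m))
    (σ : ℝ) : Prop :=
  0 < σ ∧ ∀ u : EuclideanSpace ℝ (Fin m), (∃ Y : Matrix (Fin n) (Fin n) ℝ, Yᵀ = Y ∧ A Y = u) →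
    ∃ W : Matrix (Fin n) (Fin n) ℝ, Wᵀ = W ∧ A W = u ∧ ‖W‖ ≤ σ⁻¹ * ‖u‖

theorem stmt10 {n m : ℕ} (A : Matrix (Fin n) (Fin n) ℝ →ₗ[ℝ] EuclideanSpace ℝ (Fin m))
    (b : EuclideanSpace ℝ (Fin m))
    (Xhat : Matrix (Fin n) (Fin n) ℝ) (hXhat : Xhat.PosDef) (hAXhat : A Xhat = b)
    (σ : ℝ) (hσ : IsMinSingularBound A σ)
    (μ : ℝ) (hμ : 0 < μ) (hμmin : (Xhat - μ • (1 : Matrix (Fin n) (Fin n) ℝ)).PosSemidef)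
    (X : Matrix (Fin n) (Fin n) ℝ) (hX : X.PosSemidef) :
    Metric.infDist X {Y : Matrix (Fin n) (Fin n) ℝ | Y.PosSemidef ∧ A Y = b} ≤
      σ⁻¹ * (1 + μ⁻¹ * ‖X - Xhat‖) * ‖b - A X‖ := by
  obtain ⟨hσpos, hσ⟩ := hσ
  set u : EuclideanSpace ℝ (Fin m) := b - A X with hu
  have hXhsym : Xhatᵀ = Xhat := hXhat.1
  have hXsym : Xᵀ = X := hX.1
  obtain ⟨W, hWsym, hAW, hWnorm⟩ := hσ u
    ⟨Xhat - X, by rw [transpose_sub, hXhsym, hXsym], by rw [map_sub, hAXhat]⟩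
  set w : ℝ := ‖W‖ with hw
  have hwnn : 0 ≤ w := norm_nonneg _
  have hwp : 0 < w + μ := by linarith
  set t : ℝ := w / (w + μ) with ht
  have htnn : 0 ≤ t := div_nonneg hwnn hwp.le
  have ht1 : t ≤ 1 := by rw [ht, div_le_one hwp]; linarith
  have h1t : 1 - t = μ / (w + μ) := by rw [ht]; field_simp; ring
  set Y : Matrix (Fin n) (Fin n) ℝ := X + (1 - t) • W + t • (Xhat - X) with hY
  have hYdecomp : Y = (1 - t) • X + t • (Xhat - μ • (1 : Matrix (Fin n) (Fin n) ℝ))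
      + ((t * μ) • (1 : Matrix (Fin n) (Fin n) ℝ) + (1 - t) • W) := by
    rw [hY]; module
  have hnorm_smulW : ‖(1 - t) • W‖ ≤ t * μ := by
    rw [norm_smul, Real.norm_eq_abs, abs_of_nonneg (by linarith), h1t, ht]
    rw [div_mul_eq_mul_div, div_mul_eq_mul_div, mul_comm]
  have hYpsd : Y.PosSemidef := by
    rw [hYdecomp]
    exact ((psd_smul hX (by linarith)).add (psd_smul hμmin htnn)).add
      (smul_one_add_psd _ (by rw [transpose_smul, hWsym]) _ hnorm_smulW)
  have hAY : A Y = b := by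
    rw [hY, map_add, map_add, A.map_smul, A.map_smul, hAW, map_sub, hAXhat, hu]
    module
  have hmem : Y ∈ {Y : Matrix (Fin n) (Fin n) ℝ | Y.PosSemidef ∧ A Y = b} := ⟨hYpsd, hAY⟩
  have hdist : Metric.infDist X {Y : Matrix (Fin n) (Fin n) ℝ | Y.PosSemidef ∧ A Y = b}
      ≤ dist X Y := Metric.infDist_le_dist_of_mem hmem
  have hYX : Y - X = (1 - t) • W + t • (Xhat - X) := by rw [hY]; abel
  have hnd : dist X Y ≤ (1 - t) * w + t * ‖X - Xhat‖ := by
    rw [dist_eq_norm, norm_sub_rev, hYX]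
    refine (norm_add_le _ _).trans ?_
    rw [norm_smul, norm_smul, Real.norm_eq_abs, Real.norm_eq_abs,
      abs_of_nonneg (by linarith : (0:ℝ) ≤ 1 - t), abs_of_nonneg htnn, norm_sub_rev]
  set d : ℝ := ‖X - Xhat‖ with hd
  have hdnn : 0 ≤ d := norm_nonneg _
  have hkey : (1 - t) * w + t * d ≤ σ⁻¹ * (1 + μ⁻¹ * d) * ‖u‖ := by
    have e1 : (1 - t) * w + t * d = w * (μ + d) / (w + μ) := by
      rw [h1t, ht]; field_simp
    have e2 : w * (μ + d) / (w + μ) ≤ w * (μ + d) / μ :=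
      div_le_div_of_nonneg_left (by positivity) hμ (by linarith)
    have e3 : w * (μ + d) / μ = w * (1 + μ⁻¹ * d) := by field_simp
    have e4 : w * (1 + μ⁻¹ * d) ≤ (σ⁻¹ * ‖u‖) * (1 + μ⁻¹ * d) := by
      have : (0:ℝ) ≤ 1 + μ⁻¹ * d := by positivity
      exact mul_le_mul_of_nonneg_right hWnorm this
    calc (1 - t) * w + t * d = w * (μ + d) / (w + μ) := e1
      _ ≤ w * (μ + d) / μ := e2
      _ = w * (1 + μ⁻¹ * d) := e3
      _ ≤ (σ⁻¹ * ‖u‖) * (1 + μ⁻¹ * d) := e4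
      _ = σ⁻¹ * (1 + μ⁻¹ * d) * ‖u‖ := by ring
  calc Metric.infDist X {Y : Matrix (Fin n) (Fin n) ℝ | Y.PosSemidef ∧ A Y = b}
      ≤ dist X Y := hdist
    _ ≤ (1 - t) * w + t * d := hnd
    _ ≤ σ⁻¹ * (1 + μ⁻¹ * d) * ‖u‖ := hkey
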